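/- Let (M, L) be a house allocation instance with degree list L = (ℓ_1, ..., ℓ_m): each applicant r must be matched with exactly ℓ_r distinct houses, pairwise disjointly across applicants. A house x is avoidable (some Pareto optimal multi-matching's image omits x) if and only if for every set R of applicants, the set of houses that at least one applicant in R strictly prefers to x has size at least Σ_{r ∈ R} ℓ_r. -/

import Mathlib

/-- For applicant `r`, the set of houses `P` is weakly better than the set `Q`
(of the same size): listing both in decreasing preference order of `r`, the
`i`-th element of `P` is weakly preferred to the `i`-th element of `Q`;
equivalently, there is a bijection `g : Q → P` with `g q` weakly preferred to
`q` for every `q ∈ Q`. -/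
def WeaklyBetterSet {A B : Type*} (pref : A → B → B → Prop) (r : A)
    (P Q : Finset B) : Prop :=
  ∃ g : Q → P, Function.Bijective g ∧
    ∀ q : Q, pref r ((g q : B)) (q : B) ∨ ((g q : B)) = (q : B)

/-- `P` is (strictly) better than `Q` for applicant `r`. -/
def BetterSet {A B : Type*} (pref : A → B → B → Prop) (r : A)
    (P Q : Finset B) : Prop :=
  P ≠ Q ∧ WeaklyBetterSet pref r P Q

/-- A multi-matching with degree list `ℓ`: each applicant `a` receives a set
of `ℓ a` houses, the assigned sets being pairwise disjoint. -/
def IsMultiMatching {A B : Type*} (ℓ : A → ℕ) (τ : A → Finset B) : Prop :=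
  (∀ a, (τ a).card = ℓ a) ∧ ∀ a a', a ≠ a' → Disjoint (τ a) (τ a')

/-- `S` is a blocking coalition of the multi-matching `τ`. -/
def IsBlockingM {A B : Type*} (pref : A → B → B → Prop) (ℓ : A → ℕ)
    (τ : A → Finset B) (S : Set A) : Prop :=
  S.Nonempty ∧ ∃ τ' : A → Finset B, IsMultiMatching ℓ τ' ∧
    (∀ a ∉ S, τ' a = τ a) ∧ ∀ a ∈ S, BetterSet pref a (τ' a) (τ a)

/-- `τ` is a Pareto optimal multi-matching. -/
def IsPOMM {A B : Type*} (pref : A → B → B → Prop) (ℓ : A → ℕ)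
    (τ : A → Finset B) : Prop :=
  IsMultiMatching ℓ τ ∧ ∀ S : Set A, ¬ IsBlockingM pref ℓ τ S

section Aux

open Finset

variable {A B : Type*} [Fintype B]

open scoped Classical in
/-- Rank of a house for applicant `a`: the number of houses it beats. -/
noncomputable def rkAux (pref : A → B → B → Prop) (a : A) (y : B) : ℕ :=
  (Finset.univ.filter (fun z => pref a y z)).card

lemma rk_lt_rk {pref : A → B → B → Prop} {a : A}
    (hst : IsStrictTotalOrder B (pref a)) {y z : B} (h : pref a y z) :
    rkAux pref a z < rkAux pref a y := by
  classical
  unfold rkAux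
  apply Finset.card_lt_card
  constructor
  · intro w hw
    simp only [Finset.mem_filter, Finset.mem_univ, true_and] at hw ⊢
    exact hst.toIsStrictOrder.toIsTrans.trans _ _ _ h hw
  · intro hsub
    have hz : z ∈ Finset.univ.filter (fun w => pref a y w) := by
      simp only [Finset.mem_filter, Finset.mem_univ, true_and]; exact h
    have := hsub hz
    simp only [Finset.mem_filter, Finset.mem_univ, true_and] at this
    exact hst.toIsStrictOrder.toIrrefl.irrefl z this

lemma rk_le_rk {pref : A → B → B → Prop} {a : A}
    (hst : IsStrictTotalOrder B (pref a)) {y z : B}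
    (h : pref a y z ∨ y = z) : rkAux pref a z ≤ rkAux pref a y := by
  rcases h with h | rfl
  · exact (rk_lt_rk hst h).le
  · exact le_refl _

/-- A strictly better set has strictly greater total rank. -/
lemma sum_rk_lt {pref : A → B → B → Prop} {r : A}
    (hst : IsStrictTotalOrder B (pref r)) {P Q : Finset B}
    (h : BetterSet pref r P Q) :
    ∑ y ∈ Q, rkAux pref r y < ∑ y ∈ P, rkAux pref r y := by
  obtain ⟨hne, g, hbij, hg⟩ := h
  have hsum : ∑ q : Q, rkAux pref r ((g q : B)) = ∑ p ∈ P, rkAux pref r p := by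
    rw [← Finset.sum_coe_sort P (fun p => rkAux pref r p)]
    exact Fintype.sum_bijective g hbij _ _ (fun q => rfl)
  rw [← Finset.sum_coe_sort Q (fun q => rkAux pref r q), ← hsum]
  have hex : ∃ q : Q, ((g q : B)) ≠ (q : B) := by
    by_contra hall
    push_neg at hall
    apply hne
    have hsub : P ⊆ Q := by
      intro p hp
      obtain ⟨q, hq⟩ := hbij.2 ⟨p, hp⟩
      have : ((g q : B)) = p := by rw [hq]
      rw [← this, hall q]
      exact q.2
    have hcard : Q.card ≤ P.card := by
      have := Fintype.card_of_bijective hbij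
      simpa [Fintype.card_coe] using this.le
    exact Finset.eq_of_subset_of_card_le hsub hcard
  obtain ⟨q0, hq0⟩ := hex
  refine Finset.sum_lt_sum (fun q _ => ?_) ⟨q0, Finset.mem_univ q0, ?_⟩
  · exact rk_le_rk hst (hg q)
  · rcases hg q0 with h1 | h1
    · exact rk_lt_rk hst h1
    · exact absurd h1 hq0

omit [Fintype B] in
/-- Weak improvement preserves the property that all assigned houses beat `x`. -/
lemma all_pref_of_weaklyBetter {pref : A → B → B → Prop} {r : A}
    (hst : IsStrictTotalOrder B (pref r)) {P Q : Finset B} {x : B}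
    (h : WeaklyBetterSet pref r P Q) (hQ : ∀ q ∈ Q, pref r q x) :
    ∀ p ∈ P, pref r p x := by
  obtain ⟨g, hbij, hg⟩ := h
  intro p hp
  obtain ⟨q, hq⟩ := hbij.2 ⟨p, hp⟩
  have hgq : ((g q : B)) = p := by rw [hq]
  have hqx : pref r (q : B) x := hQ q q.2
  rcases hg q with h1 | h1
  · rw [hgq] at h1
    exact hst.toIsStrictOrder.toIsTrans.trans _ _ _ h1 hqx
  · rw [hgq] at h1; rw [h1]; exact hqx

omit [Fintype B] in
/-- Swapping a house `q0` for a strictly preferred unused house `x0` yields a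
strictly better set. -/
lemma better_swap [DecidableEq B] {pref : A → B → B → Prop} {r : A}
    {Q : Finset B} {q0 x0 : B} (hq0 : q0 ∈ Q) (hx0 : x0 ∉ Q)
    (hp : pref r x0 q0) :
    BetterSet pref r (insert x0 (Q.erase q0)) Q := by
  classical
  constructor
  · intro h
    apply hx0
    rw [← h]
    exact Finset.mem_insert_self _ _
  · refine ⟨fun q => if h : (q : B) = q0 then ⟨x0, Finset.mem_insert_self _ _⟩
      else ⟨q, Finset.mem_insert_of_mem (Finset.mem_erase.2 ⟨h, q.2⟩)⟩, ⟨?_, ?_⟩, ?_⟩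
    · intro q q' hqq'
      by_cases h : (q : B) = q0 <;> by_cases h' : (q' : B) = q0
      · exact Subtype.ext (h.trans h'.symm)
      · exfalso; beta_reduce at hqq'; rw [dif_pos h, dif_neg h'] at hqq'
        have : x0 = (q' : B) := congrArg Subtype.val hqq'
        exact hx0 (this ▸ q'.2)
      · exfalso; beta_reduce at hqq'; rw [dif_neg h, dif_pos h'] at hqq'
        have : (q : B) = x0 := congrArg Subtype.val hqq'
        exact hx0 (this ▸ q.2)
      · beta_reduce at hqq'; rw [dif_neg h, dif_neg h'] at hqq'
        exact Subtype.ext (by simpa using hqq')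
    · rintro ⟨p, hpmem⟩
      rcases Finset.mem_insert.1 hpmem with hpx | hperase
      · refine ⟨⟨q0, hq0⟩, ?_⟩
        beta_reduce
        rw [dif_pos rfl]
        exact Subtype.ext hpx.symm
      · obtain ⟨hpne, hpQ⟩ := Finset.mem_erase.1 hperase
        refine ⟨⟨p, hpQ⟩, ?_⟩
        beta_reduce
        rw [dif_neg hpne]
    · intro q
      by_cases h : (q : B) = q0
      · beta_reduce
        rw [dif_pos h]
        left
        simpa [h] using hp
      · beta_reduce
        rw [dif_neg h]
        right
        rfl

end Aux

/-- in the multi-matching setting with degree list `ℓ`, a house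
`x` is avoidable iff for every set `R` of applicants, the set of houses that
some applicant of `R` strictly prefers to `x` has size at least
`∑_{r ∈ R} ℓ r`. -/
theorem stmt19 {A B : Type*} [Fintype A] [Fintype B]
    (pref : A → B → B → Prop) (hpref : ∀ a, IsStrictTotalOrder B (pref a))
    (ℓ : A → ℕ) (hℓ : ∀ a, 1 ≤ ℓ a) (x : B) :
    (∃ τ : A → Finset B, IsPOMM pref ℓ τ ∧ ∀ a, x ∉ τ a) ↔
      ∀ R : Finset A, (∑ r ∈ R, ℓ r) ≤ {y : B | ∃ r ∈ R, pref r y x}.ncard := by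
  classical
  constructor
  · -- forward direction
    rintro ⟨τ, ⟨hmm, hpo⟩, hx⟩ R
    -- every assigned house is strictly preferred to x by its owner
    have key : ∀ r : A, ∀ y ∈ τ r, pref r y x := by
      intro r y hy
      rcases (haveI := hpref r; trichotomous (r := pref r) y x) with h | h | h
      · exact h
      · exact absurd (h ▸ hy) (hx r)
      · -- x is strictly preferred to y by r : blocking coalition {r}
        exfalso
        apply hpo ({r} : Set A)
        refine ⟨Set.singleton_nonempty r,
          fun a => if a = r then insert x ((τ r).erase y) else τ a, ⟨?_, ?_⟩, ?_, ?_⟩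
        · intro a
          by_cases ha : a = r
          · subst ha
            beta_reduce
            rw [if_pos rfl, Finset.card_insert_of_notMem
                (fun hxm => hx a (Finset.mem_of_mem_erase hxm)),
              Finset.card_erase_of_mem hy, hmm.1 a]
            have := hℓ a
            omega
          · beta_reduce; rw [if_neg ha]; exact hmm.1 a
        · intro a a' haa'
          by_cases ha : a = r <;> by_cases ha' : a' = r
          · exact absurd (ha.trans ha'.symm) haa'
          · subst ha
            beta_reduce
            rw [if_pos rfl, if_neg ha']
            rw [Finset.disjoint_insert_left]
            exact ⟨hx a', Finset.disjoint_of_subset_left (Finset.erase_subset _ _)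
              (hmm.2 a a' haa')⟩
          · subst ha'
            beta_reduce
            rw [if_neg ha, if_pos rfl]
            rw [Finset.disjoint_insert_right]
            exact ⟨hx a, Finset.disjoint_of_subset_right (Finset.erase_subset _ _)
              (hmm.2 a a' haa')⟩
          · beta_reduce; rw [if_neg ha, if_neg ha']; exact hmm.2 a a' haa'
        · intro a ha
          beta_reduce
          rw [if_neg (by simpa using ha)]
        · intro a ha
          rcases ha with rfl
          beta_reduce
          rw [if_pos rfl]
          exact better_swap hy (hx a) h
    -- now count
    have hdisj : ∀ r ∈ R, ∀ r' ∈ R, r ≠ r' → Disjoint (τ r) (τ r') :=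
      fun r _ r' _ h => hmm.2 r r' h
    calc ∑ r ∈ R, ℓ r = ∑ r ∈ R, (τ r).card := by
            refine Finset.sum_congr rfl fun r _ => (hmm.1 r).symm
      _ = (R.biUnion τ).card := (Finset.card_biUnion hdisj).symm
      _ = ((R.biUnion τ : Finset B) : Set B).ncard := (Set.ncard_coe_finset _).symm
      _ ≤ {y : B | ∃ r ∈ R, pref r y x}.ncard := by
            apply Set.ncard_le_ncard _ (Set.toFinite _)
            intro y hy
            simp only [Finset.coe_biUnion, Set.mem_iUnion, Finset.mem_coe] at hy
            obtain ⟨r, hr, hyr⟩ := hy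
            exact ⟨r, hr, key r y hyr⟩
  · -- backward direction
    intro hall
    -- the houses strictly preferred to x by r
    set E : A → Finset B := fun r => Finset.univ.filter (fun y => pref r y x) with hE
    -- Hall's theorem on the sigma type
    have hhall : ∀ s : Finset ((r : A) × Fin (ℓ r)),
        s.card ≤ (s.biUnion (fun p => E p.1)).card := by
      intro s
      set R : Finset A := s.image Sigma.fst with hR
      have h1 : s.card ≤ ∑ r ∈ R, ℓ r := by
        have hsub : s ⊆ R.sigma (fun r => (Finset.univ : Finset (Fin (ℓ r)))) := by
          rintro ⟨r, i⟩ hmem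
          exact Finset.mem_sigma.2 ⟨Finset.mem_image.2 ⟨⟨r, i⟩, hmem, rfl⟩,
            Finset.mem_univ i⟩
        calc s.card ≤ (R.sigma (fun r => (Finset.univ : Finset (Fin (ℓ r))))).card :=
              Finset.card_le_card hsub
          _ = ∑ r ∈ R, ℓ r := by
              rw [Finset.card_sigma]
              exact Finset.sum_congr rfl fun r _ => by simp
      have h2 : s.biUnion (fun p => E p.1) = R.biUnion E := by
        ext y
        simp only [Finset.mem_biUnion, Finset.mem_image, hR]
        constructor
        · rintro ⟨p, hp, hyp⟩
          exact ⟨p.1, ⟨p, hp, rfl⟩, hyp⟩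
        · rintro ⟨r, ⟨p, hp, rfl⟩, hyr⟩
          exact ⟨p, hp, hyr⟩
      have h3 : {y : B | ∃ r ∈ R, pref r y x}.ncard = (R.biUnion E).card := by
        rw [← Set.ncard_coe_finset]
        congr 1
        ext y
        simp [hE]
      rw [h2]
      calc s.card ≤ ∑ r ∈ R, ℓ r := h1
        _ ≤ {y : B | ∃ r ∈ R, pref r y x}.ncard := hall R
        _ = (R.biUnion E).card := h3
    obtain ⟨f, hfinj, hfmem⟩ :=
      (Finset.all_card_le_biUnion_card_iff_exists_injective (fun p : (r : A) × Fin (ℓ r)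
        => E p.1)).1 hhall
    -- initial multi-matching: every assigned house beats x
    set τ₀ : A → Finset B := fun r =>
      (Finset.univ : Finset (Fin (ℓ r))).image (fun i => f ⟨r, i⟩) with hτ₀
    have hτ₀inj : ∀ r : A, Function.Injective (fun i : Fin (ℓ r) => f ⟨r, i⟩) := by
      intro r i j hij
      have := hfinj hij
      simpa using this
    have hτ₀mm : IsMultiMatching ℓ τ₀ := by
      constructor
      · intro r
        rw [hτ₀, Finset.card_image_of_injective _ (hτ₀inj r)]
        simp
      · intro a a' haa'
        rw [Finset.disjoint_left]
        intro y hy hy'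
        simp only [hτ₀, Finset.mem_image, Finset.mem_univ, true_and] at hy hy'
        obtain ⟨i, hi⟩ := hy
        obtain ⟨j, hj⟩ := hy'
        have := hfinj (hi.trans hj.symm)
        exact haa' (congrArg Sigma.fst this)
    have hτ₀pref : ∀ a : A, ∀ y ∈ τ₀ a, pref a y x := by
      intro a y hy
      simp only [hτ₀, Finset.mem_image, Finset.mem_univ, true_and] at hy
      obtain ⟨i, hi⟩ := hy
      have := hfmem ⟨a, i⟩
      rw [hE] at this
      simp only [Finset.mem_filter, Finset.mem_univ, true_and] at this
      rw [← hi]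
      exact this
    -- candidate set
    set C : Set (A → Finset B) :=
      {τ | IsMultiMatching ℓ τ ∧ ∀ a : A, ∀ y ∈ τ a, pref a y x} with hC
    have hCne : C.Nonempty := ⟨τ₀, hτ₀mm, hτ₀pref⟩
    -- potential function
    set Φ : (A → Finset B) → ℕ := fun τ => ∑ a : A, ∑ y ∈ τ a, rkAux pref a y with hΦ
    obtain ⟨τs, hτsC, hτsmax⟩ :=
      Set.Finite.exists_maximalFor Φ C (Set.toFinite C) hCne
    refine ⟨τs, ⟨hτsC.1, ?_⟩, ?_⟩
    · -- Pareto optimality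
      rintro S ⟨hSne, τ'', hmm'', hout, hbet⟩
      -- τ'' is also in C
      have hτ''C : τ'' ∈ C := by
        refine ⟨hmm'', fun a y hy => ?_⟩
        by_cases ha : a ∈ S
        · exact all_pref_of_weaklyBetter (hpref a) (hbet a ha).2 (hτsC.2 a) y hy
        · rw [hout a ha] at hy
          exact hτsC.2 a y hy
      -- Φ strictly increases
      have hlt : Φ τs < Φ τ'' := by
        obtain ⟨a₀, ha₀⟩ := hSne
        refine Finset.sum_lt_sum (fun a _ => ?_) ⟨a₀, Finset.mem_univ a₀, ?_⟩
        · by_cases ha : a ∈ S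
          · exact (sum_rk_lt (hpref a) (hbet a ha)).le
          · rw [hout a ha]
        · exact sum_rk_lt (hpref a₀) (hbet a₀ ha₀)
      exact absurd (hτsmax hτ''C hlt.le) (not_le.2 hlt)
    · -- x is avoided
      intro a hxa
      exact (hpref a).toIsStrictOrder.toIrrefl.irrefl x (hτsC.2 a x hxa)
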